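/- The affine curves C₊ = {g₊ = 0} and C₋ = {g₋ = 0} intersect in exactly 32 points: the set {(x,y) ∈ ℂ² : g₊(x,y) = 0 and g₋(x,y) = 0} is finite of cardinality 32. -/

import Mathlib

/- The affine curves `C₊ = {g₊ = 0}` and `C₋ = {g₋ = 0}` intersect in exactly 32
points. -/

/-- `g₊(x,y) := (2y⁴ + y² + 2)x⁴ − (y⁴ − 24y² + 1)x² + 2y⁴ + y² + 2`. -/
def gPlus (x y : ℂ) : ℂ :=
  (2 * y ^ 4 + y ^ 2 + 2) * x ^ 4 - (y ^ 4 - 24 * y ^ 2 + 1) * x ^ 2 +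
    2 * y ^ 4 + y ^ 2 + 2

/-- `g₋(x,y) := (2y⁴ − y² + 2)x⁴ + (y⁴ + 24y² + 1)x² + 2y⁴ − y² + 2`. -/
def gMinus (x y : ℂ) : ℂ :=
  (2 * y ^ 4 - y ^ 2 + 2) * x ^ 4 + (y ^ 4 + 24 * y ^ 2 + 1) * x ^ 2 +
    2 * y ^ 4 - y ^ 2 + 2

open Polynomial

/-- The resolvent polynomial `Y^8 + 14 Y^4 + 1`. -/
noncomputable def P8 : Polynomial ℂ := X ^ 8 + C 14 * X ^ 4 + 1

lemma P8_eval (y : ℂ) : P8.eval y = y ^ 8 + 14 * y ^ 4 + 1 := by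
  simp [P8]

lemma P8_natDegree : P8.natDegree = 8 := by
  unfold P8; compute_degree!

lemma P8_ne_zero : P8 ≠ 0 := by
  intro h
  have := P8_natDegree
  rw [h] at this
  simp at this

lemma P8_derivative : derivative P8 = C 8 * X ^ 7 + C 56 * X ^ 3 := by
  simp [P8]
  simp only [← C_1, ← C_add]
  rw [← mul_assoc, ← C_mul]
  norm_num

lemma P8_separable : P8.Separable := by
  have h : (C 384 + C 56 * X ^ 4) * P8 +
      (C (-97) * X + C (-7) * X ^ 5) * derivative P8 = C 384 := by
    rw [P8_derivative]
    unfold P8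
    simp only [map_neg, map_ofNat]
    norm_num
    ring
  have h2 : C ((384 : ℂ)⁻¹) * ((C 384 + C 56 * X ^ 4) * P8 +
      (C (-97) * X + C (-7) * X ^ 5) * derivative P8) = 1 := by
    rw [h, ← C_mul]
    norm_num
  exact ⟨C ((384 : ℂ)⁻¹) * (C 384 + C 56 * X ^ 4),
    C ((384 : ℂ)⁻¹) * (C (-97) * X + C (-7) * X ^ 5), by linear_combination h2⟩

/-- Auxiliary facts about roots of `y^8 + 14 y^4 + 1`. -/
lemma root_facts {y : ℂ} (hr : y ^ 8 + 14 * y ^ 4 + 1 = 0) :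
    y ≠ 0 ∧ y ^ 2 ≠ 1 ∧ y ^ 2 ≠ -1 := by
  refine ⟨?_, ?_, ?_⟩
  · intro h; rw [h] at hr; norm_num at hr
  · intro h
    have h16 : (16 : ℂ) = 0 := by
      linear_combination hr - (y ^ 6 + y ^ 4 + 15 * y ^ 2 + 15) * h
    norm_num at h16
  · intro h
    have h16 : (16 : ℂ) = 0 := by
      linear_combination hr - (y ^ 2 - 1) * (y ^ 4 + 15) * h
    norm_num at h16

/-- The set of intersection points, as a finset. -/
noncomputable def T : Finset ℂ := P8.roots.toFinset

lemma mem_T {y : ℂ} : y ∈ T ↔ y ^ 8 + 14 * y ^ 4 + 1 = 0 := by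
  rw [T, Multiset.mem_toFinset, mem_roots P8_ne_zero, IsRoot, P8_eval]

lemma T_card : T.card = 8 := by
  have hnodup : P8.roots.Nodup := Polynomial.nodup_roots P8_separable
  have hsplit : P8.roots.card = P8.natDegree :=
    IsAlgClosed.card_roots_eq_natDegree
  rw [T, Multiset.toFinset_card_of_nodup hnodup, hsplit, P8_natDegree]

noncomputable def F : Finset (ℂ × ℂ) :=
  T.biUnion fun y => ({y, -y, y⁻¹, -y⁻¹} : Finset ℂ) ×ˢ ({y} : Finset ℂ)

lemma set_eq : {p : ℂ × ℂ | gPlus p.1 p.2 = 0 ∧ gMinus p.1 p.2 = 0} = ↑F := by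
  ext ⟨x, y⟩
  simp only [Set.mem_setOf_eq, F, Finset.coe_biUnion, Set.mem_iUnion,
    Finset.mem_coe, Finset.mem_product, Finset.mem_insert, Finset.mem_singleton,
    gPlus, gMinus]
  constructor
  · rintro ⟨hgp, hgm⟩
    -- first, x ≠ 0
    have hx : x ≠ 0 := by
      intro h
      have hy2 : y ^ 2 = 0 := by
        linear_combination (hgp - hgm) / 2 + (-(y ^ 2 * x ^ 3) + (y ^ 4 + 1) * x) * h
      have h2 : (2 : ℂ) = 0 := by
        linear_combination hgp - ((2 * y ^ 4 + y ^ 2 + 2) * x ^ 3 -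
          (y ^ 4 - 24 * y ^ 2 + 1) * x) * h - (2 * y ^ 2 + 1) * hy2
      norm_num at h2
    -- the resolvent vanishes
    have h3 : (y ^ 8 + 14 * y ^ 4 + 1) * x ^ 2 = 0 := by
      linear_combination ((2 * y ^ 4 + y ^ 2 + 2) / 4) * hgm -
        ((2 * y ^ 4 - y ^ 2 + 2) / 4) * hgp
    have hr : y ^ 8 + 14 * y ^ 4 + 1 = 0 :=
      (mul_eq_zero.mp h3).resolve_right (pow_ne_zero 2 hx)
    obtain ⟨hy0, hy1, hy2⟩ := root_facts hr
    -- leading coefficient nonzero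
    have hA : 2 * y ^ 4 + y ^ 2 + 2 ≠ 0 := by
      intro h
      have h1 : (1 : ℂ) = 0 := by
        linear_combination ((2 * y ^ 2 - 3) / 49) * hr +
          ((26 - 14 * y ^ 2 + 2 * y ^ 4 - y ^ 6) / 49) * h
      norm_num at h1
    -- factorization
    have h5 : (2 * y ^ 4 + y ^ 2 + 2) * ((x ^ 2 - y ^ 2) * (x ^ 2 * y ^ 2 - 1)) = 0 := by
      linear_combination y ^ 2 * hgp - 2 * x ^ 2 * hr
    have h4 := (mul_eq_zero.mp h5).resolve_left hA
    refine ⟨y, mem_T.mpr hr, ?_, rfl⟩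
    rcases mul_eq_zero.mp h4 with h6 | h6
    · have : (x - y) * (x + y) = 0 := by linear_combination h6
      rcases mul_eq_zero.mp this with h7 | h7
      · exact Or.inl (by linear_combination h7)
      · exact Or.inr (Or.inl (by linear_combination h7))
    · have : (x * y - 1) * (x * y + 1) = 0 := by linear_combination h6
      rcases mul_eq_zero.mp this with h7 | h7
      · refine Or.inr (Or.inr (Or.inl ?_))
        field_simp
        linear_combination h7
      · refine Or.inr (Or.inr (Or.inr ?_))
        field_simp
        linear_combination h7
  · rintro ⟨y', hy'T, hx, rfl⟩
    have hr := mem_T.mp hy'T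
    obtain ⟨hy0, -, -⟩ := root_facts hr
    rcases hx with rfl | rfl | rfl | rfl
    · exact ⟨by linear_combination 2 * hr, by linear_combination 2 * hr⟩
    · exact ⟨by linear_combination 2 * hr, by linear_combination 2 * hr⟩
    · constructor
      · field_simp
        linear_combination 2 * hr
      · field_simp
        linear_combination 2 * hr
    · constructor
      · field_simp
        linear_combination 2 * hr
      · field_simp
        linear_combination 2 * hr

lemma F_card : F.card = 32 := by
  rw [F, Finset.card_biUnion]
  · have h4 : ∀ y ∈ T,
        (({y, -y, y⁻¹, -y⁻¹} : Finset ℂ) ×ˢ ({y} : Finset ℂ)).card = 4 := by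
      intro y hy
      obtain ⟨hy0, hy1, hy2⟩ := root_facts (mem_T.mp hy)
      rw [Finset.card_product, Finset.card_singleton, mul_one]
      have e1 : y ≠ -y := by
        intro h
        apply hy0
        have : (2 : ℂ) * y = 0 := by linear_combination h
        simpa using this
      have e2 : y ≠ y⁻¹ := by
        intro h
        apply hy1
        field_simp at h
        linear_combination h
      have e3 : y ≠ -y⁻¹ := by
        intro h
        apply hy2
        field_simp at h
        linear_combination h
      have e4 : -y ≠ y⁻¹ := by
        intro h
        apply hy2
        field_simp at h
        linear_combination -h
      have e5 : -y ≠ -y⁻¹ := by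
        intro h
        apply hy1
        field_simp at h
        linear_combination -h
      have e6 : (y⁻¹ : ℂ) ≠ -y⁻¹ := by
        intro h
        have : (2 : ℂ) * y⁻¹ = 0 := by linear_combination h
        simp at this
        exact hy0 this
      rw [Finset.card_insert_of_notMem (by simp [e1, e2, e3]),
        Finset.card_insert_of_notMem (by simp [e4, e5]),
        Finset.card_insert_of_notMem (by simp [e6]),
        Finset.card_singleton]
    rw [Finset.sum_congr rfl h4, Finset.sum_const, T_card]
    norm_num
  · intro y1 h1 y2 h2 hne
    simp only [Finset.disjoint_left, Finset.mem_product, Finset.mem_singleton]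
    rintro ⟨a, b⟩ ⟨-, rfl⟩ ⟨-, h⟩
    exact hne h

/-- The affine curves `C₊ = {g₊ = 0}` and `C₋ = {g₋ = 0}` intersect in exactly 32
points: the set `{(x,y) ∈ ℂ² : g₊(x,y) = 0 ∧ g₋(x,y) = 0}` is finite of cardinality
`32`. -/
theorem curves_intersect_in_32_points :
    {p : ℂ × ℂ | gPlus p.1 p.2 = 0 ∧ gMinus p.1 p.2 = 0}.Finite ∧
    {p : ℂ × ℂ | gPlus p.1 p.2 = 0 ∧ gMinus p.1 p.2 = 0}.ncard = 32 := by
  rw [set_eq]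
  exact ⟨F.finite_toSet, by rw [Set.ncard_coe_finset, F_card]⟩
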